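/- Let θ > 0 and suppose a, b : ℝ → ℝ satisfy the Lipschitz condition (A1) and condition (A4), and that condition (A0) holds: limsup_{|x|→∞} c(x)·sgn(x) < 0. Then G_θ = ∫_{-∞}^{+∞} dx/(b(x)² φ_θ(x)) < ∞, i.e. the positive recurrence condition (A3) is satisfied. -/

import Mathlib

open MeasureTheory ENNReal

lemma aux_poly_exp_int (p β : ℝ) (hp : 0 ≤ p) (hβ : 0 < β) :
    IntegrableOn (fun x : ℝ => (1 + x ^ p) ^ 2 * Real.exp (-β * x)) (Set.Ioi 0) := by
  have e0 := integrableOn_rpow_mul_exp_neg_mul_rpow (p := 1) (s := 0) (b := β)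
    (by norm_num) one_pos hβ
  have e1 := integrableOn_rpow_mul_exp_neg_mul_rpow (p := 1) (s := p) (b := β)
    (by linarith) one_pos hβ
  have e2 := integrableOn_rpow_mul_exp_neg_mul_rpow (p := 1) (s := p + p) (b := β)
    (by linarith) one_pos hβ
  have hsum : IntegrableOn (fun x : ℝ => x ^ (0:ℝ) * Real.exp (-β * x ^ (1:ℝ))
      + 2 * (x ^ p * Real.exp (-β * x ^ (1:ℝ))) + x ^ (p + p) * Real.exp (-β * x ^ (1:ℝ)))
      (Set.Ioi 0) := (e0.add (e1.const_mul 2)).add e2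
  refine hsum.congr_fun (fun x hx => ?_) measurableSet_Ioi
  have hx0 : (0:ℝ) < x := hx
  beta_reduce
  rw [Real.rpow_one, Real.rpow_zero, Real.rpow_add hx0]
  ring

lemma aux_even_neg_int (g : ℝ → ℝ) (R : ℝ) (hg : ∀ x, g (-x) = g x)
    (h : IntegrableOn g (Set.Ici R)) : IntegrableOn g (Set.Iic (-R)) := by
  have h2 := (MeasurePreserving.integrableOn_comp_preimage
    (Measure.measurePreserving_neg (volume : Measure ℝ))
    (Homeomorph.neg ℝ).measurableEmbedding).2 h
  have e1 : (g ∘ Neg.neg) = g := funext fun x => hg x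
  have e2 : (Neg.neg ⁻¹' Set.Ici R : Set ℝ) = Set.Iic (-R) := by ext x; simp [le_neg]
  rwa [e1, e2] at h2

/-- For `θ > 0`, under (A1), (A4) and condition (A0), the positive recurrence
condition (A3) holds: `G_θ = ∫_{-∞}^{+∞} dx/(b(x)² φ_θ(x)) < ∞`. -/
theorem positive_recurrence_condition (a b : ℝ → ℝ) (θ : ℝ) (hθ : 0 < θ) (L : ℝ) (hL : 0 < L)
    (hlip : ∀ x y : ℝ, |a x - a y| + |b x - b y| ≤ L * |x - y|)
    (K p : ℝ) (hK : 0 < K) (hp : 0 ≤ p)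
    (hb : ∀ x : ℝ, |b x|⁻¹ ≤ K * (1 + |x| ^ p))
    (hA0 : ∃ ε > (0:ℝ), ∃ R > (0:ℝ),
      (∀ x : ℝ, R ≤ x → a x / (b x) ^ 2 ≤ -ε) ∧
      (∀ x : ℝ, x ≤ -R → ε ≤ a x / (b x) ^ 2))
    (φ : ℝ → ℝ)
    (hφ : ∀ x : ℝ, φ x = Real.exp (-2 * θ * ∫ y in (0:ℝ)..x, a y / (b y) ^ 2)) :
    (∫⁻ x : ℝ, ENNReal.ofReal (1 / ((b x) ^ 2 * φ x))) < ⊤ := by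
  obtain ⟨ε, hε, R, hR, hcp, hcm⟩ := hA0
  -- continuity of a and b
  have cont_a : Continuous a := by
    refine (LipschitzWith.of_dist_le_mul (K := ⟨L, hL.le⟩) (f := a) fun x y => ?_).continuous
    rw [Real.dist_eq, Real.dist_eq]
    have := hlip x y
    have h0 := abs_nonneg (b x - b y)
    exact (by linarith : |a x - a y| ≤ L * |x - y|)
  have cont_b : Continuous b := by
    refine (LipschitzWith.of_dist_le_mul (K := ⟨L, hL.le⟩) (f := b) fun x y => ?_).continuous
    rw [Real.dist_eq, Real.dist_eq]
    have := hlip x y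
    have h0 := abs_nonneg (a x - a y)
    exact (by linarith : |b x - b y| ≤ L * |x - y|)
  -- b never vanishes
  have hbne : ∀ x : ℝ, b x ≠ 0 := by
    by_contra hcon
    push_neg at hcon
    obtain ⟨x₀, hx₀⟩ := hcon
    set M : ℝ → ℝ := fun x => K * (1 + |x| ^ p) with hM
    have hMpos : ∀ x, 0 < M x := fun x => mul_pos hK (by positivity)
    have contM : Continuous M := by
      have habs : Continuous fun x : ℝ => |x| ^ p := by
        rw [continuous_iff_continuousAt]
        intro x
        exact (Real.continuousAt_rpow_const _ _ (Or.inr hp)).comp continuous_abs.continuousAt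
      exact continuous_const.mul (continuous_const.add habs)
    have key : {x : ℝ | b x = 0} = {x : ℝ | |b x| < (M x)⁻¹} := by
      ext x
      simp only [Set.mem_setOf_eq]
      constructor
      · intro h
        rw [h, abs_zero]
        exact inv_pos.2 (hMpos x)
      · intro h
        by_contra hbx
        have h1 : |b x|⁻¹ ≤ M x := hb x
        have h2 : 0 < |b x| := abs_pos.2 hbx
        have h3 : 1 ≤ |b x| * M x := by
          have := mul_le_mul_of_nonneg_left h1 h2.le
          rwa [mul_inv_cancel₀ h2.ne'] at this
        have h4 : (M x)⁻¹ ≤ |b x| := by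
          have := mul_le_mul_of_nonneg_right h3 (inv_pos.2 (hMpos x)).le
          rwa [one_mul, mul_assoc, mul_inv_cancel₀ (hMpos x).ne', mul_one] at this
        linarith
    have hopen : IsOpen {x : ℝ | b x = 0} := by
      rw [key]
      exact isOpen_lt (continuous_abs.comp cont_b) (contM.inv₀ fun x => (hMpos x).ne')
    have hclosed : IsClosed {x : ℝ | b x = 0} := isClosed_eq cont_b continuous_const
    have huniv : {x : ℝ | b x = 0} = Set.univ :=
      IsClopen.eq_univ ⟨hclosed, hopen⟩ ⟨x₀, hx₀⟩
    have hbR : b R = 0 := by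
      have : R ∈ {x : ℝ | b x = 0} := huniv.symm ▸ Set.mem_univ R
      exact this
    have := hcp R le_rfl
    rw [hbR] at this
    norm_num at this
    linarith
  set c : ℝ → ℝ := fun x => a x / b x ^ 2 with hcdef
  have cont_c : Continuous c :=
    cont_a.div (cont_b.pow 2) fun x => pow_ne_zero 2 (hbne x)
  have hci : ∀ u v : ℝ, IntervalIntegrable c volume u v :=
    fun u v => cont_c.intervalIntegrable u v
  set I : ℝ → ℝ := fun x => ∫ y in (0:ℝ)..x, c y with hIdef
  have contI : Continuous I := intervalIntegral.continuous_primitive hci 0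
  have hφ' : ∀ x, φ x = Real.exp (-2 * θ * I x) := hφ
  have φpos : ∀ x, 0 < φ x := fun x => by rw [hφ' x]; exact Real.exp_pos _
  have contφ : Continuous φ := by
    have : φ = fun x => Real.exp (-2 * θ * I x) := funext hφ'
    rw [this]
    exact Real.continuous_exp.comp (continuous_const.mul contI)
  set f : ℝ → ℝ := fun x => 1 / (b x ^ 2 * φ x) with hfdef
  have fnn : ∀ x, 0 ≤ f x := fun x =>
    div_nonneg zero_le_one (mul_nonneg (sq_nonneg (b x)) (φpos x).le)
  have cont_f : Continuous f :=
    continuous_const.div ((cont_b.pow 2).mul contφ)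
      fun x => mul_ne_zero (pow_ne_zero 2 (hbne x)) (φpos x).ne'
  have f_eq : ∀ x, f x = |b x|⁻¹ ^ 2 * Real.exp (2 * θ * I x) := by
    intro x
    have h1 : |b x|⁻¹ ^ 2 = (b x ^ 2)⁻¹ := by rw [inv_pow, sq_abs]
    have h2 : Real.exp (2 * θ * I x) = (Real.exp (-2 * θ * I x))⁻¹ := by
      rw [← Real.exp_neg]
      congr 1
      ring
    show 1 / (b x ^ 2 * φ x) = _
    rw [hφ' x, h1, h2, one_div, mul_inv]
  set β : ℝ := 2 * θ * ε with hβdef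
  have hβ : 0 < β := by positivity
  set A : ℝ := max (Real.exp (2 * θ * I R + β * R)) (Real.exp (2 * θ * I (-R) + β * R)) with hA
  have hApos : 0 < A := lt_max_of_lt_left (Real.exp_pos _)
  set g : ℝ → ℝ := fun x => K ^ 2 * A * ((1 + |x| ^ p) ^ 2 * Real.exp (-β * |x|)) with hgdef
  have h2θ : (0:ℝ) ≤ 2 * θ := by linarith
  -- tail bound on [R, ∞)
  have tail_pos : ∀ x ∈ Set.Ici R, f x ≤ g x := by
    intro x hx
    have hx' : R ≤ x := hx
    have habsx : |x| = x := abs_of_nonneg (le_trans hR.le hx')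
    have hIx : I x ≤ I R - ε * (x - R) := by
      have hadd : I R + ∫ y in R..x, c y = I x :=
        intervalIntegral.integral_add_adjacent_intervals (hci 0 R) (hci R x)
      have hmono : (∫ y in R..x, c y) ≤ ∫ _ in R..x, (-ε) := by
        apply intervalIntegral.integral_mono_on hx' (hci R x) intervalIntegrable_const
        intro y hy
        exact hcp y hy.1
      rw [intervalIntegral.integral_const, smul_eq_mul] at hmono
      nlinarith [hadd, hmono]
    have hexp : Real.exp (2 * θ * I x) ≤ A * Real.exp (-β * |x|) := by
      have hkey : 2 * θ * I x ≤ 2 * θ * I R + β * R + -β * |x| := by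
        have hint := mul_le_mul_of_nonneg_left hIx h2θ
        rw [habsx, hβdef]
        nlinarith [hint]
      calc Real.exp (2 * θ * I x) ≤ Real.exp (2 * θ * I R + β * R + -β * |x|) :=
            Real.exp_le_exp.2 hkey
        _ = Real.exp (2 * θ * I R + β * R) * Real.exp (-β * |x|) := Real.exp_add _ _
        _ ≤ A * Real.exp (-β * |x|) :=
            mul_le_mul_of_nonneg_right (le_max_left _ _) (Real.exp_pos _).le
    calc f x = |b x|⁻¹ ^ 2 * Real.exp (2 * θ * I x) := f_eq x
      _ ≤ (K * (1 + |x| ^ p)) ^ 2 * Real.exp (2 * θ * I x) := by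
          apply mul_le_mul_of_nonneg_right _ (Real.exp_pos _).le
          exact pow_le_pow_left₀ (inv_nonneg.2 (abs_nonneg _)) (hb x) 2
      _ ≤ (K * (1 + |x| ^ p)) ^ 2 * (A * Real.exp (-β * |x|)) := by
          apply mul_le_mul_of_nonneg_left hexp (by positivity)
      _ = g x := by show _ = K ^ 2 * A * _; rw [mul_pow]; ring
  -- tail bound on (-∞, -R]
  have tail_neg : ∀ x ∈ Set.Iic (-R), f x ≤ g x := by
    intro x hx
    have hx' : x ≤ -R := hx
    have habsx : |x| = -x := abs_of_nonpos (le_trans hx' (by linarith))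
    have hIx : I x ≤ I (-R) - ε * (-R - x) := by
      have hadd : I (-R) + ∫ y in (-R)..x, c y = I x :=
        intervalIntegral.integral_add_adjacent_intervals (hci 0 (-R)) (hci (-R) x)
      have hsymm : (∫ y in (-R)..x, c y) = -∫ y in x..(-R), c y :=
        intervalIntegral.integral_symm x (-R)
      have hmono : (∫ _ in x..(-R), ε) ≤ ∫ y in x..(-R), c y := by
        apply intervalIntegral.integral_mono_on hx' intervalIntegrable_const (hci x (-R))
        intro y hy
        exact hcm y hy.2
      rw [intervalIntegral.integral_const, smul_eq_mul] at hmono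
      nlinarith [hadd, hmono, hsymm]
    have hexp : Real.exp (2 * θ * I x) ≤ A * Real.exp (-β * |x|) := by
      have hkey : 2 * θ * I x ≤ 2 * θ * I (-R) + β * R + -β * |x| := by
        have hint := mul_le_mul_of_nonneg_left hIx h2θ
        rw [habsx, hβdef]
        nlinarith [hint]
      calc Real.exp (2 * θ * I x) ≤ Real.exp (2 * θ * I (-R) + β * R + -β * |x|) :=
            Real.exp_le_exp.2 hkey
        _ = Real.exp (2 * θ * I (-R) + β * R) * Real.exp (-β * |x|) := Real.exp_add _ _
        _ ≤ A * Real.exp (-β * |x|) :=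
            mul_le_mul_of_nonneg_right (le_max_right _ _) (Real.exp_pos _).le
    calc f x = |b x|⁻¹ ^ 2 * Real.exp (2 * θ * I x) := f_eq x
      _ ≤ (K * (1 + |x| ^ p)) ^ 2 * Real.exp (2 * θ * I x) := by
          apply mul_le_mul_of_nonneg_right _ (Real.exp_pos _).le
          exact pow_le_pow_left₀ (inv_nonneg.2 (abs_nonneg _)) (hb x) 2
      _ ≤ (K * (1 + |x| ^ p)) ^ 2 * (A * Real.exp (-β * |x|)) := by
          apply mul_le_mul_of_nonneg_left hexp (by positivity)
      _ = g x := by show _ = K ^ 2 * A * _; rw [mul_pow]; ring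
  -- integrability of the dominating function on the tails
  have gInt1 : IntegrableOn g (Set.Ici R) := by
    have base : IntegrableOn (fun x : ℝ => K ^ 2 * A * ((1 + x ^ p) ^ 2 * Real.exp (-β * x)))
        (Set.Ioi 0) := (aux_poly_exp_int p β hp hβ).const_mul (K ^ 2 * A)
    have base' : IntegrableOn (fun x : ℝ => K ^ 2 * A * ((1 + x ^ p) ^ 2 * Real.exp (-β * x)))
        (Set.Ici R) := base.mono_set fun x hx => lt_of_lt_of_le hR hx
    refine base'.congr_fun (fun x hx => ?_) measurableSet_Ici
    show _ = K ^ 2 * A * _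
    rw [abs_of_nonneg (le_trans hR.le hx)]
  have gInt2 : IntegrableOn g (Set.Iic (-R)) := by
    refine aux_even_neg_int g R (fun x => ?_) gInt1
    show K ^ 2 * A * _ = K ^ 2 * A * _
    rw [abs_neg]
  -- integrability of f on the three pieces
  have fInt1 : IntegrableOn f (Set.Ici R) := by
    refine Integrable.mono' gInt1 cont_f.aestronglyMeasurable.restrict ?_
    refine (ae_restrict_iff' measurableSet_Ici).2 (ae_of_all _ fun x hx => ?_)
    rw [Real.norm_eq_abs, abs_of_nonneg (fnn x)]
    exact tail_pos x hx
  have fInt2 : IntegrableOn f (Set.Iic (-R)) := by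
    refine Integrable.mono' gInt2 cont_f.aestronglyMeasurable.restrict ?_
    refine (ae_restrict_iff' measurableSet_Iic).2 (ae_of_all _ fun x hx => ?_)
    rw [Real.norm_eq_abs, abs_of_nonneg (fnn x)]
    exact tail_neg x hx
  have fInt0 : IntegrableOn f (Set.Icc (-R) R) :=
    cont_f.continuousOn.integrableOn_compact isCompact_Icc
  have fInt : Integrable f := by
    rw [← integrableOn_univ]
    refine ((fInt2.union fInt0).union fInt1).mono_set fun x _ => ?_
    simp only [Set.mem_union, Set.mem_Iic, Set.mem_Icc, Set.mem_Ici]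
    rcases le_total x (-R) with h | h
    · exact Or.inl (Or.inl h)
    · rcases le_total x R with h' | h'
      · exact Or.inl (Or.inr ⟨h, h'⟩)
      · exact Or.inr h'
  have final : (∫⁻ x : ℝ, ENNReal.ofReal (f x)) < ⊤ := by
    rw [← ofReal_integral_eq_lintegral_ofReal fInt (ae_of_all _ fnn)]
    exact ENNReal.ofReal_lt_top
  exact final
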